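/- arXiv:math/0511265 — 2 statements merged into one kernel-verified Lean document; each statement's English description precedes it below -/
import Mathlib

section
/- Let (ε_n)_{n≥0} be an i.i.d. sequence of standard exponential random variables and let 0 < q < 1. Then the random series I = Σ_{n=0}^∞ q^n ε_n converges almost surely, and for every real λ < 1 its exponential moment satisfies E[exp(λ I)] = ∏_{j=0}^∞ (1 - λ q^j)^{-1}. -/
open MeasureTheory ProbabilityTheory Real

section Aux
open Filter Topology

lemma expMeasure_ae_nonneg : ∀ᵐ x ∂(expMeasure 1), 0 ≤ x := by
  have h : (expMeasure 1) (Set.Iio 0) = 0 := by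
    rw [expMeasure, gammaMeasure, withDensity_apply _ measurableSet_Iio]
    exact lintegral_gammaPDF_of_nonpos le_rfl
  refine (ae_iff).2 ?_
  convert h using 2
  ext x; simp [not_le]

lemma lintegral_exp_expMeasure {t : ℝ} (ht : t < 1) :
    ∫⁻ x, ENNReal.ofReal (Real.exp (t * x)) ∂(expMeasure 1)
      = ENNReal.ofReal (1 - t)⁻¹ := by
  have hb : 0 < 1 - t := by linarith
  rw [expMeasure, gammaMeasure,
    lintegral_withDensity_eq_lintegral_mul _ (by unfold gammaPDF; exact (measurable_gammaPDFReal 1 1).ennreal_ofReal : Measurable (gammaPDF 1 1))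
      ((by fun_prop : Measurable fun x : ℝ => Real.exp (t * x)).ennreal_ofReal)]
  have hgp : (gammaPDF 1 1 : ℝ → ENNReal) = exponentialPDF 1 := rfl
  have h1 : ∀ x : ℝ, (gammaPDF 1 1 * fun x => ENNReal.ofReal (Real.exp (t * x))) x
      = ENNReal.ofReal (if 0 ≤ x then Real.exp (-((1 - t) * x)) else 0) := by
    intro x
    simp only [Pi.mul_apply, hgp, exponentialPDF_eq]
    split_ifs with h
    · rw [← ENNReal.ofReal_mul (by positivity)]
      congr 1
      rw [one_mul, ← Real.exp_add]
      ring_nf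
    · simp
  simp_rw [h1]
  have key := lintegral_exponentialPDF_eq_one hb
  have h2 : ∀ x : ℝ, exponentialPDF (1 - t) x
      = ENNReal.ofReal (1 - t) * ENNReal.ofReal (if 0 ≤ x then Real.exp (-((1 - t) * x)) else 0) := by
    intro x
    rw [exponentialPDF_eq]
    split_ifs with h
    · rw [← ENNReal.ofReal_mul hb.le]
    · simp
  rw [show (fun x => exponentialPDF (1-t) x) = fun x => ENNReal.ofReal (1 - t) *
      ENNReal.ofReal (if 0 ≤ x then Real.exp (-((1 - t) * x)) else 0) from funext h2,
    lintegral_const_mul _ (by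
      apply Measurable.ennreal_ofReal
      exact Measurable.ite measurableSet_Ici (by fun_prop : Measurable fun x : ℝ => Real.exp (-((1-t) * x))) measurable_const)] at key
  have hc0 : ENNReal.ofReal (1 - t) ≠ 0 := (ENNReal.ofReal_pos.mpr hb).ne'
  have hct : ENNReal.ofReal (1 - t) ≠ ⊤ := ENNReal.ofReal_ne_top
  rw [ENNReal.ofReal_inv_of_pos hb]
  calc ∫⁻ x, ENNReal.ofReal (if 0 ≤ x then Real.exp (-((1 - t) * x)) else 0)
      = (ENNReal.ofReal (1 - t))⁻¹ * (ENNReal.ofReal (1 - t) *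
          ∫⁻ x, ENNReal.ofReal (if 0 ≤ x then Real.exp (-((1 - t) * x)) else 0)) := by
        rw [← mul_assoc, ENNReal.inv_mul_cancel hc0 hct, one_mul]
    _ = (ENNReal.ofReal (1 - t))⁻¹ := by rw [key, mul_one]

lemma integrable_exp_expMeasure {t : ℝ} (ht : t < 1) :
    Integrable (fun x => Real.exp (t * x)) (expMeasure 1) := by
  have : IsProbabilityMeasure (expMeasure 1) := isProbabilityMeasure_expMeasure one_pos
  constructor
  · exact (by fun_prop : Measurable fun x : ℝ => Real.exp (t * x)).aestronglyMeasurable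
  · rw [hasFiniteIntegral_iff_ofReal (ae_of_all _ fun x => (Real.exp_pos _).le),
      lintegral_exp_expMeasure ht]
    exact ENNReal.ofReal_lt_top

lemma integral_exp_expMeasure {t : ℝ} (ht : t < 1) :
    ∫ x, Real.exp (t * x) ∂(expMeasure 1) = (1 - t)⁻¹ := by
  have hb : 0 < 1 - t := by linarith
  rw [integral_eq_lintegral_of_nonneg_ae (ae_of_all _ fun x => (Real.exp_pos _).le)
    (by fun_prop : Measurable fun x : ℝ => Real.exp (t * x)).aestronglyMeasurable,
    lintegral_exp_expMeasure ht, ENNReal.toReal_ofReal (by positivity)]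

lemma lintegral_id_expMeasure_lt_top :
    ∫⁻ x, ENNReal.ofReal x ∂(expMeasure 1) < ⊤ := by
  have hle : ∀ x : ℝ, ENNReal.ofReal x ≤ ENNReal.ofReal 2 * ENNReal.ofReal (Real.exp ((1/2 : ℝ) * x)) := by
    intro x
    rw [← ENNReal.ofReal_mul (by norm_num)]
    apply ENNReal.ofReal_le_ofReal
    have := Real.add_one_le_exp ((1/2 : ℝ) * x)
    nlinarith [Real.exp_pos ((1/2:ℝ) * x)]
  calc ∫⁻ x, ENNReal.ofReal x ∂(expMeasure 1)
      ≤ ∫⁻ x, ENNReal.ofReal 2 * ENNReal.ofReal (Real.exp ((1/2:ℝ) * x)) ∂(expMeasure 1) :=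
        lintegral_mono hle
    _ = ENNReal.ofReal 2 * ∫⁻ x, ENNReal.ofReal (Real.exp ((1/2:ℝ) * x)) ∂(expMeasure 1) :=
        lintegral_const_mul _ ((by fun_prop : Measurable fun x : ℝ => Real.exp ((1/2:ℝ) * x)).ennreal_ofReal)
    _ = ENNReal.ofReal 2 * ENNReal.ofReal (1 - 1/2)⁻¹ := by rw [lintegral_exp_expMeasure (by norm_num)]
    _ < ⊤ := by finiteness

end Aux

section Main
open Filter Topology

/-- If `(ε n)` is an i.i.d. sequence of standard exponential random variables and
`0 < q < 1`, then the series `I = ∑ q^n ε_n` converges a.s., and for every `λ < 1`,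
`E[exp (λ I)] = ∏_{j=0}^∞ (1 - λ q^j)⁻¹`. -/

theorem exponential_functional_poisson_laplace
    {Ω : Type*} [MeasurableSpace Ω] (μ : Measure Ω) [IsProbabilityMeasure μ]
    (ε : ℕ → Ω → ℝ) (hmeas : ∀ n, Measurable (ε n))
    (hindep : iIndepFun ε μ)
    (hlaw : ∀ n, Measure.map (ε n) μ = expMeasure 1)
    (q : ℝ) (hq0 : 0 < q) (hq1 : q < 1) :
    (∀ᵐ ω ∂μ, Summable (fun n => q ^ n * ε n ω)) ∧
    ∀ l : ℝ, l < 1 →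
      ∫ ω, Real.exp (l * ∑' n, q ^ n * ε n ω) ∂μ
        = ∏' j : ℕ, (1 - l * q ^ j)⁻¹ := by
  have hnn : ∀ᵐ ω ∂μ, ∀ n, 0 ≤ ε n ω := by
    rw [ae_all_iff]
    intro n
    have h : ∀ᵐ x ∂(Measure.map (ε n) μ), 0 ≤ x := by
      rw [hlaw n]; exact expMeasure_ae_nonneg
    exact (ae_map_iff (hmeas n).aemeasurable
      (measurableSet_le measurable_const measurable_id)).mp h
  have hmeasJ : ∀ n, Measurable fun ω => ENNReal.ofReal (q ^ n * ε n ω) :=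
    fun n => ((hmeas n).const_mul _).ennreal_ofReal
  have hJn : ∀ n, ∫⁻ ω, ENNReal.ofReal (q ^ n * ε n ω) ∂μ
      = ENNReal.ofReal (q ^ n) * ∫⁻ x, ENNReal.ofReal x ∂(expMeasure 1) := by
    intro n
    have h1 : ∀ ω, ENNReal.ofReal (q ^ n * ε n ω)
        = ENNReal.ofReal (q ^ n) * ENNReal.ofReal (ε n ω) :=
      fun ω => ENNReal.ofReal_mul (by positivity)
    simp_rw [h1]
    rw [lintegral_const_mul _ (hmeas n).ennreal_ofReal]
    congr 1
    rw [← hlaw n, lintegral_map ENNReal.measurable_ofReal (hmeas n)]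
  have hJ : ∫⁻ ω, ∑' n, ENNReal.ofReal (q ^ n * ε n ω) ∂μ < ⊤ := by
    rw [lintegral_tsum fun n => (hmeasJ n).aemeasurable]
    simp_rw [hJn, ENNReal.tsum_mul_right]
    have hq' : ∀ n : ℕ, ENNReal.ofReal (q ^ n) = (ENNReal.ofReal q) ^ n :=
      fun n => ENNReal.ofReal_pow hq0.le n
    simp_rw [hq', ENNReal.tsum_geometric]
    refine ENNReal.mul_lt_top ?_ lintegral_id_expMeasure_lt_top
    exact ENNReal.inv_lt_top.mpr (tsub_pos_of_lt (ENNReal.ofReal_lt_one.mpr hq1))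
  have hJae : ∀ᵐ ω ∂μ, ∑' n, ENNReal.ofReal (q ^ n * ε n ω) ≠ ⊤ :=
    (ae_lt_top (Measurable.ennreal_tsum hmeasJ) hJ.ne).mono fun ω h => h.ne
  have hsummable : ∀ᵐ ω ∂μ, Summable fun n => q ^ n * ε n ω := by
    filter_upwards [hJae, hnn] with ω hω hωnn
    refine (ENNReal.summable_toReal hω).congr fun n => ?_
    rw [ENNReal.toReal_ofReal (mul_nonneg (by positivity) (hωnn n))]
  refine ⟨hsummable, fun l hl => ?_⟩
  -- basic facts about l
  have hlt : ∀ n : ℕ, l * q ^ n < 1 := by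
    intro n
    rcases le_or_gt l 0 with h | h
    · exact lt_of_le_of_lt (mul_nonpos_of_nonpos_of_nonneg h (by positivity)) one_pos
    · nlinarith [pow_le_one₀ hq0.le hq1.le (n := n), pow_pos hq0 n]
  have hpos : ∀ j : ℕ, 0 < 1 - l * q ^ j := fun j => by linarith [hlt j]
  -- independence/measurability of the scaled sequence
  have hXmeas : ∀ n, Measurable fun ω => q ^ n * ε n ω := fun n => (hmeas n).const_mul _
  have hXindep : iIndepFun (fun n ω => q ^ n * ε n ω) μ := by
    have := hindep.comp (fun n (x : ℝ) => q ^ n * x) (fun n => by fun_prop)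
    exact this
  -- per-term integrability and mgf values
  have hterm_int : ∀ n : ℕ, Integrable (fun ω => rexp (l * (q ^ n * ε n ω))) μ := by
    intro n
    have heq : (fun ω => rexp (l * (q ^ n * ε n ω)))
        = (fun x => rexp ((l * q ^ n) * x)) ∘ ε n := by
      funext ω; simp only [Function.comp_apply, mul_assoc]
    rw [heq]
    have h := integrable_exp_expMeasure (hlt n)
    rw [← hlaw n] at h
    exact (integrable_map_measure
      (by fun_prop : Measurable fun x : ℝ => rexp ((l * q ^ n) * x)).aestronglyMeasurable
      (hmeas n).aemeasurable).mp h
  have hterm_val : ∀ n : ℕ, ∫ ω, rexp (l * (q ^ n * ε n ω)) ∂μ = (1 - l * q ^ n)⁻¹ := by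
    intro n
    have h := integral_exp_expMeasure (hlt n)
    rw [← hlaw n, integral_map (hmeas n).aemeasurable
      (by fun_prop : Measurable fun x : ℝ => rexp ((l * q ^ n) * x)).aestronglyMeasurable] at h
    rw [← h]
    congr 1; funext ω; rw [mul_assoc]
  have hsum_val : ∀ N : ℕ, ∫ ω, rexp (l * ∑ n ∈ Finset.range N, q ^ n * ε n ω) ∂μ
      = ∏ n ∈ Finset.range N, (1 - l * q ^ n)⁻¹ := by
    intro N
    have h := hXindep.mgf_sum hXmeas (Finset.range N) (t := l)
    simp only [mgf, Finset.sum_apply] at h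
    rw [h]
    exact Finset.prod_congr rfl fun n _ => hterm_val n
  have hsum_int : ∀ N : ℕ,
      Integrable (fun ω => rexp (l * ∑ n ∈ Finset.range N, q ^ n * ε n ω)) μ := by
    intro N
    have h := hXindep.integrable_exp_mul_sum hXmeas (s := Finset.range N)
      (fun i _ => hterm_int i)
    simpa only [Finset.sum_apply] using h
  have hG : ∀ N : ℕ,
      ∫⁻ ω, ENNReal.ofReal (rexp (l * ∑ n ∈ Finset.range N, q ^ n * ε n ω)) ∂μ
        = ENNReal.ofReal (∏ n ∈ Finset.range N, (1 - l * q ^ n)⁻¹) := by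
    intro N
    rw [← ofReal_integral_eq_lintegral_ofReal (hsum_int N)
      (ae_of_all _ fun ω => (exp_pos _).le), hsum_val N]
  -- multipliability of the infinite product
  have hlog : Summable fun j : ℕ => Real.log (1 - l * q ^ j) := by
    have hgeo : Summable fun j : ℕ => 2 * |l| * q ^ j :=
      (summable_geometric_of_lt_one hq0.le hq1).mul_left _
    refine Summable.of_norm_bounded_eventually_nat hgeo ?_
    have h0 : Tendsto (fun j : ℕ => |l| * q ^ j) atTop (𝓝 0) := by
      simpa using (tendsto_pow_atTop_nhds_zero_of_lt_one hq0.le hq1).const_mul |l|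
    filter_upwards [h0.eventually_le_const (by norm_num : (0:ℝ) < 1/2)] with j hj
    have hx : |l * q ^ j| = |l| * q ^ j := by
      rw [abs_mul, abs_pow, abs_of_pos hq0]
    have hx2 : |l * q ^ j| ≤ 1 / 2 := by rw [hx]; exact hj
    have hx1 : |l * q ^ j| < 1 := lt_of_le_of_lt hx2 (by norm_num)
    have h := Real.abs_log_sub_add_sum_range_le hx1 0
    simp only [Finset.range_zero, Finset.sum_empty, zero_add, pow_one, zero_pow] at h
    have key : |l * q ^ j| / (1 - |l * q ^ j|) ≤ 2 * |l * q ^ j| := by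
      rw [div_le_iff₀ (by linarith)]
      nlinarith [abs_nonneg (l * q ^ j)]
    rw [Real.norm_eq_abs]
    calc |Real.log (1 - l * q ^ j)| ≤ |l * q ^ j| / (1 - |l * q ^ j|) := h
      _ ≤ 2 * |l * q ^ j| := key
      _ = 2 * |l| * q ^ j := by rw [hx, mul_assoc]
  have hlogsum : ∀ _ : Unit, Summable fun j : ℕ => Real.log ((1 - l * q ^ j)⁻¹) :=
    fun _ => by simpa only [Real.log_inv] using hlog.neg
  have hmult : Multipliable fun j : ℕ => (1 - l * q ^ j)⁻¹ := by
    have := Real.multipliable_of_summable_log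
      (fun j => inv_pos.mpr (hpos j)) (hlogsum ())
    exact this
  have hPpos : 0 < ∏' j : ℕ, (1 - l * q ^ j)⁻¹ := by
    have h2 := Real.rexp_tsum_eq_tprod
      (fun j => inv_pos.mpr (hpos j)) (hlogsum ())
    rw [← h2]
    exact exp_pos _
  have hPlim : Tendsto (fun N => ENNReal.ofReal (∏ n ∈ Finset.range N, (1 - l * q ^ n)⁻¹))
      atTop (𝓝 (ENNReal.ofReal (∏' j : ℕ, (1 - l * q ^ j)⁻¹))) :=
    (ENNReal.continuous_ofReal.tendsto _).comp hmult.hasProd.tendsto_prod_nat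
  -- a.e. pointwise convergence
  have hptws : ∀ᵐ ω ∂μ, Tendsto
      (fun N => ENNReal.ofReal (rexp (l * ∑ n ∈ Finset.range N, q ^ n * ε n ω)))
      atTop (𝓝 (ENNReal.ofReal (rexp (l * ∑' n, q ^ n * ε n ω)))) := by
    filter_upwards [hsummable] with ω hs
    exact (ENNReal.continuous_ofReal.tendsto _).comp
      ((Real.continuous_exp.tendsto _).comp (hs.hasSum.tendsto_sum_nat.const_mul l))
  have hGmeas : ∀ N : ℕ,
      Measurable fun ω => ENNReal.ofReal (rexp (l * ∑ n ∈ Finset.range N, q ^ n * ε n ω)) := by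
    intro N
    exact (((Finset.measurable_sum (Finset.range N)
      fun i _ => (hmeas i).const_mul (q ^ i)).const_mul l).exp).ennreal_ofReal
  have hlim : Tendsto
      (fun N => ∫⁻ ω, ENNReal.ofReal (rexp (l * ∑ n ∈ Finset.range N, q ^ n * ε n ω)) ∂μ)
      atTop (𝓝 (∫⁻ ω, ENNReal.ofReal (rexp (l * ∑' n, q ^ n * ε n ω)) ∂μ)) := by
    rcases le_or_gt 0 l with hl0 | hl0
    · refine lintegral_tendsto_of_tendsto_of_monotone
        (fun N => (hGmeas N).aemeasurable) ?_ hptws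
      filter_upwards [hnn] with ω hω
      intro N M hNM
      apply ENNReal.ofReal_le_ofReal
      apply Real.exp_le_exp.mpr
      apply mul_le_mul_of_nonneg_left _ hl0
      exact Finset.sum_le_sum_of_subset_of_nonneg (Finset.range_subset_range.mpr hNM)
        (fun i _ _ => mul_nonneg (by positivity) (hω i))
    · refine tendsto_lintegral_of_dominated_convergence (fun _ => 1)
        hGmeas ?_ (by simp) hptws
      intro N
      filter_upwards [hnn] with ω hω
      have hS : 0 ≤ ∑ n ∈ Finset.range N, q ^ n * ε n ω :=
        Finset.sum_nonneg fun i _ => mul_nonneg (by positivity) (hω i)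
      have : rexp (l * ∑ n ∈ Finset.range N, q ^ n * ε n ω) ≤ 1 :=
        Real.exp_le_one_iff.mpr (mul_nonpos_of_nonpos_of_nonneg hl0.le hS)
      calc ENNReal.ofReal (rexp (l * ∑ n ∈ Finset.range N, q ^ n * ε n ω))
          ≤ ENNReal.ofReal 1 := ENNReal.ofReal_le_ofReal this
        _ = 1 := ENNReal.ofReal_one
  simp_rw [hG] at hlim
  have hkey : ∫⁻ ω, ENNReal.ofReal (rexp (l * ∑' n, q ^ n * ε n ω)) ∂μ
      = ENNReal.ofReal (∏' j : ℕ, (1 - l * q ^ j)⁻¹) := tendsto_nhds_unique hlim hPlim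
  -- a.e. strong measurability of the limit integrand
  have haesm : AEStronglyMeasurable (fun ω => rexp (l * ∑' n, q ^ n * ε n ω)) μ := by
    have hJm : Measurable fun ω => rexp (l * (∑' n, ENNReal.ofReal (q ^ n * ε n ω)).toReal) :=
      (((Measurable.ennreal_tsum hmeasJ).ennreal_toReal.const_mul l).exp)
    refine hJm.aestronglyMeasurable.congr ?_
    filter_upwards [hsummable, hnn] with ω hs hω
    have h1 : (∑' n, ENNReal.ofReal (q ^ n * ε n ω)) = ENNReal.ofReal (∑' n, q ^ n * ε n ω) :=
      (ENNReal.ofReal_tsum_of_nonneg (fun n => mul_nonneg (by positivity) (hω n)) hs).symm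
    rw [h1, ENNReal.toReal_ofReal (tsum_nonneg fun n => mul_nonneg (by positivity) (hω n))]
  rw [integral_eq_lintegral_of_nonneg_ae (ae_of_all _ fun ω => (exp_pos _).le) haesm,
    hkey, ENNReal.toReal_ofReal hPpos.le]

end Main
end

section
/- Let (a_n)_{n≥0} be defined by a_n = (−1)^n q^{n(n−1)/2} / ((q;q)_∞ (q;q)_n) for 0 < q < 1, where (q;q)_n = ∏_{j=1}^n (1−q^j). Then for every s > −1, ∫_0^∞ x^s Σ_{n=0}^∞ exp(−x/q^n) a_n dx = Γ(1+s) · (q^{1+s}; q)_∞ / (q;q)_∞, where the sum converges absolutely and may be integrated term by term. -/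
open MeasureTheory Real Finset

open Filter
noncomputable def eulerC (q : ℝ) (n : ℕ) : ℝ :=
  (-1) ^ n * q ^ (n * (n - 1) / 2) / ∏ j ∈ Finset.range n, (1 - q ^ (j + 1))

lemma my_pochhammer_pos {q : ℝ} (hq0 : 0 < q) (hq1 : q < 1) (n : ℕ) :
    0 < ∏ j ∈ Finset.range n, (1 - q ^ (j + 1)) := by
  apply Finset.prod_pos
  intro j _
  have : q ^ (j + 1) < 1 := pow_lt_one₀ hq0.le hq1 (Nat.succ_ne_zero j)
  linarith

lemma eulerC_rec {q : ℝ} (hq0 : 0 < q) (hq1 : q < 1) (m : ℕ) :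
    eulerC q (m + 1) * (1 - q ^ (m + 1)) = -(eulerC q m * q ^ m) := by
  have hex : (m + 1) * (m + 1 - 1) / 2 = m * (m - 1) / 2 + m := by
    rcases m with _ | n
    · simp
    · have hA : (n + 1) * n % 2 = 0 := by
        have h := Nat.even_mul_succ_self n
        rw [mul_comm] at h
        exact Nat.even_iff.mp h
      have hB : (n + 1 + 1) * (n + 1) = (n + 1) * n + 2 * (n + 1) := by ring
      simp only [Nat.add_sub_cancel]
      omega
  have hPm : (∏ j ∈ Finset.range m, (1 - q ^ (j + 1))) ≠ 0 :=
    (my_pochhammer_pos hq0 hq1 m).ne'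
  have hlast : (1 - q ^ (m + 1)) ≠ 0 := by
    have : q ^ (m + 1) < 1 := pow_lt_one₀ hq0.le hq1 (Nat.succ_ne_zero m)
    intro h; linarith [this]
  rw [eulerC, eulerC, hex, Finset.prod_range_succ, pow_add]
  field_simp
  ring

lemma eulerC_abs_succ {q : ℝ} (hq0 : 0 < q) (hq1 : q < 1) (n : ℕ) :
    |eulerC q (n + 1)| = |eulerC q n| * (q ^ n / (1 - q ^ (n + 1))) := by
  have h1 : (0:ℝ) < 1 - q ^ (n + 1) := by
    have : q ^ (n + 1) < 1 := pow_lt_one₀ hq0.le hq1 (Nat.succ_ne_zero n)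
    linarith
  have h2 : eulerC q (n + 1) = -(eulerC q n * q ^ n) / (1 - q ^ (n + 1)) :=
    eq_div_of_mul_eq h1.ne' (eulerC_rec hq0 hq1 n)
  rw [h2, abs_div, abs_neg, abs_mul, abs_of_pos h1, abs_of_pos (pow_pos hq0 n)]
  ring

lemma eulerC_abs_summable {q : ℝ} (hq0 : 0 < q) (hq1 : q < 1) {r : ℝ} (hr0 : 0 ≤ r)
    (hr1 : r ≤ 1) : Summable (fun n : ℕ => |eulerC q n| * r ^ n) := by
  apply summable_of_ratio_norm_eventually_le (r := 1/2) (by norm_num)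
  have hq' : Tendsto (fun n : ℕ => q ^ n) atTop (nhds 0) :=
    tendsto_pow_atTop_nhds_zero_of_lt_one hq0.le hq1
  have hev : ∀ᶠ n : ℕ in atTop, q ^ n < (1 - q) / 2 :=
    hq'.eventually_lt_const (by nlinarith)
  filter_upwards [hev] with n hn
  have h1 : (0:ℝ) < 1 - q ^ (n + 1) := by
    have : q ^ (n + 1) < 1 := pow_lt_one₀ hq0.le hq1 (Nat.succ_ne_zero n)
    linarith
  have hq1n : 1 - q ≤ 1 - q ^ (n + 1) := by
    have : q ^ (n + 1) ≤ q := by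
      calc q ^ (n + 1) = q * q ^ n := by ring
      _ ≤ q * 1 := by nlinarith [pow_le_one₀ hq0.le hq1.le (n := n), pow_pos hq0 n]
      _ = q := by ring
    linarith
  have hratio : q ^ n / (1 - q ^ (n + 1)) ≤ 1 / 2 := by
    rw [div_le_div_iff₀ h1 (by norm_num)]
    calc q ^ n * 2 ≤ (1 - q) / 2 * 2 := by nlinarith
    _ = 1 - q := by ring
    _ ≤ 1 - q ^ (n + 1) := hq1n
    _ = 1 * (1 - q ^ (n+1)) := by ring
  have hnonneg : 0 ≤ |eulerC q n| * r ^ n := by positivity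
  rw [Real.norm_eq_abs, Real.norm_eq_abs, abs_of_nonneg (by positivity),
    abs_of_nonneg hnonneg, eulerC_abs_succ hq0 hq1 n, pow_succ]
  calc |eulerC q n| * (q ^ n / (1 - q ^ (n + 1))) * (r ^ n * r)
      ≤ |eulerC q n| * (1/2) * (r ^ n * 1) := by
        apply mul_le_mul
        · exact mul_le_mul_of_nonneg_left hratio (abs_nonneg _)
        · exact mul_le_mul_of_nonneg_left hr1 (by positivity)
        · positivity
        · positivity
  _ = 1 / 2 * (|eulerC q n| * r ^ n) := by ring

lemma eulerC_summable {q : ℝ} (hq0 : 0 < q) (hq1 : q < 1) {z : ℝ} (hz : |z| ≤ 1) :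
    Summable (fun n : ℕ => eulerC q n * z ^ n) := by
  apply Summable.of_norm_bounded (g := fun n => |eulerC q n| * |z| ^ n)
    (eulerC_abs_summable hq0 hq1 (abs_nonneg z) hz)
  intro n
  rw [Real.norm_eq_abs, abs_mul, abs_pow]

noncomputable def eulerF (q z : ℝ) : ℝ := ∑' n : ℕ, eulerC q n * z ^ n

lemma eulerF_funeq {q : ℝ} (hq0 : 0 < q) (hq1 : q < 1) {z : ℝ} (hz0 : 0 ≤ z) (hz1 : z ≤ 1) :
    eulerF q z = (1 - z) * eulerF q (q * z) := by
  have hqz : |q * z| ≤ 1 := by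
    rw [abs_mul, abs_of_pos hq0, abs_of_nonneg hz0]
    nlinarith
  have hg : Summable (fun n : ℕ => eulerC q n * (q * z) ^ n) := eulerC_summable hq0 hq1 hqz
  set g : ℕ → ℝ := fun n => eulerC q n * (q * z) ^ n with hgdef
  set h : ℕ → ℝ := fun n => Nat.rec 0 (fun m _ => z * g m) n with hhdef
  have hh : Summable h := by
    rw [← summable_nat_add_iff 1]
    exact (hg.mul_left z)
  have hpt : ∀ n : ℕ, eulerC q n * z ^ n = g n - h n := by
    intro n
    rcases n with _ | m
    · simp [hhdef, hgdef]
    · show eulerC q (m+1) * z ^ (m+1) = g (m+1) - z * g m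
      have hrec := eulerC_rec hq0 hq1 m
      simp only [hgdef]
      linear_combination z ^ (m + 1) * hrec
  have hsum : Summable (fun n : ℕ => eulerC q n * z ^ n) :=
    eulerC_summable hq0 hq1 (by rw [abs_of_nonneg hz0]; exact hz1)
  have : eulerF q z = ∑' n, (g n - h n) := by
    rw [eulerF]; exact tsum_congr hpt
  rw [this, Summable.tsum_sub hg hh]
  have hth : ∑' n, h n = z * eulerF q (q * z) := by
    rw [Summable.tsum_eq_zero_add hh]
    show (0:ℝ) + ∑' n, z * g n = _
    rw [zero_add, tsum_mul_left]
    rfl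
  rw [hth, eulerF]
  ring

lemma eulerF_iterate {q : ℝ} (hq0 : 0 < q) (hq1 : q < 1) {z : ℝ} (hz0 : 0 ≤ z) (hz1 : z ≤ 1) :
    ∀ N : ℕ, eulerF q z = (∏ j ∈ Finset.range N, (1 - z * q ^ j)) * eulerF q (z * q ^ N) := by
  intro N
  induction N with
  | zero => simp
  | succ N ih =>
    have hzN0 : 0 ≤ z * q ^ N := by positivity
    have hzN1 : z * q ^ N ≤ 1 := by
      calc z * q ^ N ≤ 1 * 1 := by
            apply mul_le_mul hz1 (pow_le_one₀ hq0.le hq1.le) (by positivity) (by norm_num)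
      _ = 1 := by ring
    rw [ih, eulerF_funeq hq0 hq1 hzN0 hzN1, Finset.prod_range_succ]
    have : q * (z * q ^ N) = z * q ^ (N + 1) := by ring
    rw [this]
    ring

lemma eulerC_zero' (q : ℝ) : eulerC q 0 = 1 := by simp [eulerC]

lemma my_prod_aux {q u : ℝ} (hq0 : 0 < q) (hq1 : q < 1) (hu0 : 0 ≤ u) (hu1 : u < 1) :
    Multipliable (fun j : ℕ => 1 - u * q ^ j) ∧ 0 < ∏' j : ℕ, (1 - u * q ^ j) := by
  have hterm : ∀ j : ℕ, 0 < 1 - u * q ^ j := by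
    intro j
    have h1 : u * q ^ j ≤ u * 1 :=
      mul_le_mul_of_nonneg_left (pow_le_one₀ hq0.le hq1.le) hu0
    nlinarith
  have hlog : Summable fun j : ℕ => Real.log (1 - u * q ^ j) := by
    apply Summable.of_norm_bounded (g := fun j => (u / (1 - u)) * q ^ j)
      ((summable_geometric_of_lt_one hq0.le hq1).mul_left _)
    intro j
    have ht0 : 0 ≤ u * q ^ j := by positivity
    have ht1 : u * q ^ j ≤ u := by
      nlinarith [pow_le_one₀ hq0.le hq1.le (n := j)]
    have hp : 0 < 1 - u * q ^ j := hterm j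
    have h2 : Real.log (1 - u * q ^ j) ≤ 0 := Real.log_nonpos (by linarith) (by linarith)
    rw [Real.norm_eq_abs, abs_of_nonpos h2]
    have h4 : Real.log (1 - u * q ^ j)⁻¹ ≤ (1 - u * q ^ j)⁻¹ - 1 :=
      Real.log_le_sub_one_of_pos (inv_pos.2 hp)
    rw [Real.log_inv] at h4
    have h5 : (1 - u * q ^ j)⁻¹ - 1 = (u * q ^ j) / (1 - u * q ^ j) := by field_simp; ring
    have h6 : (u * q ^ j) / (1 - u * q ^ j) ≤ (u * q ^ j) / (1 - u) :=
      div_le_div_of_nonneg_left ht0 (by linarith) (by linarith)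
    have h7 : (u * q ^ j) / (1 - u) = u / (1 - u) * q ^ j := by ring
    linarith
  have hm : Multipliable (fun j : ℕ => 1 - u * q ^ j) :=
    Real.multipliable_of_summable_log (f := fun j : ℕ => 1 - u * q ^ j) hterm hlog
  refine ⟨hm, ?_⟩
  have := Real.rexp_tsum_eq_tprod (f := fun j : ℕ => 1 - u * q ^ j) hterm hlog
  rw [← this]
  exact Real.exp_pos _

set_option maxHeartbeats 1000000 in
lemma eulerF_near_one {q : ℝ} (hq0 : 0 < q) (hq1 : q < 1) {w : ℝ} (hw0 : 0 ≤ w) (hw1 : w ≤ 1) :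
    |eulerF q w - 1| ≤ (∑' n : ℕ, |eulerC q (n + 1)|) * w := by
  have hS : Summable (fun n : ℕ => |eulerC q (n + 1)|) := by
    have := (summable_nat_add_iff 1).2
      (eulerC_abs_summable hq0 hq1 (by norm_num) (le_refl (1:ℝ)))
    simpa using this
  have hsum : Summable (fun n : ℕ => eulerC q n * w ^ n) :=
    eulerC_summable hq0 hq1 (by rw [abs_of_nonneg hw0]; exact hw1)
  have hzero : eulerF q w = 1 + ∑' n : ℕ, eulerC q (n + 1) * w ^ (n + 1) := by
    rw [eulerF, Summable.tsum_eq_zero_add hsum, eulerC_zero']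
    norm_num
  rw [hzero]
  have hsum2 : Summable (fun n : ℕ => eulerC q (n + 1) * w ^ (n + 1)) :=
    (summable_nat_add_iff 1).2 hsum
  have h1 : |∑' n : ℕ, eulerC q (n + 1) * w ^ (n + 1)| ≤
      ∑' n : ℕ, |eulerC q (n + 1) * w ^ (n + 1)| := by
    have := norm_tsum_le_tsum_norm (f := fun n : ℕ => eulerC q (n + 1) * w ^ (n + 1))
      (by simp only [Real.norm_eq_abs]; exact hsum2.abs)
    simp only [Real.norm_eq_abs] at this
    exact this
  have h2 : ∑' n : ℕ, |eulerC q (n + 1) * w ^ (n + 1)| ≤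
      ∑' n : ℕ, |eulerC q (n + 1)| * w := by
    apply Summable.tsum_le_tsum _ hsum2.abs (hS.mul_right w)
    intro n
    rw [abs_mul, abs_pow, abs_of_nonneg hw0]
    apply mul_le_mul_of_nonneg_left _ (abs_nonneg _)
    calc w ^ (n + 1) ≤ w ^ 1 := pow_le_pow_of_le_one hw0 hw1 (by omega)
    _ = w := pow_one w
  have h3 : ∑' n : ℕ, |eulerC q (n + 1)| * w = (∑' n : ℕ, |eulerC q (n + 1)|) * w :=
    tsum_mul_right
  calc |1 + ∑' n : ℕ, eulerC q (n + 1) * w ^ (n + 1) - 1|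
      = |∑' n : ℕ, eulerC q (n + 1) * w ^ (n + 1)| := by congr 1; ring
  _ ≤ _ := by rw [← h3]; exact le_trans h1 h2

lemma eulerF_eq_tprod {q : ℝ} (hq0 : 0 < q) (hq1 : q < 1) {z : ℝ} (hz0 : 0 ≤ z) (hz1 : z < 1) :
    eulerF q z = ∏' j : ℕ, (1 - z * q ^ j) := by
  obtain ⟨hmult, _⟩ := my_prod_aux hq0 hq1 hz0 hz1
  have htend1 : Filter.Tendsto (fun N : ℕ => ∏ j ∈ Finset.range N, (1 - z * q ^ j))
      Filter.atTop (nhds (∏' j : ℕ, (1 - z * q ^ j))) :=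
    hmult.hasProd.tendsto_prod_nat
  set S := ∑' n : ℕ, |eulerC q (n + 1)|
  have htend0 : Filter.Tendsto (fun N : ℕ => eulerF q (z * q ^ N) - 1) Filter.atTop (nhds 0) := by
    refine squeeze_zero_norm (a := fun N => S * z * q ^ N) ?_ ?_
    · intro N
      have hw0 : 0 ≤ z * q ^ N := by positivity
      have hw1 : z * q ^ N ≤ 1 := by
        nlinarith [pow_le_one₀ hq0.le hq1.le (n := N), pow_pos hq0 N]
      have := eulerF_near_one hq0 hq1 hw0 hw1
      rw [Real.norm_eq_abs]
      calc |eulerF q (z * q ^ N) - 1| ≤ S * (z * q ^ N) := this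
      _ = S * z * q ^ N := by ring
    · have := (tendsto_pow_atTop_nhds_zero_of_lt_one hq0.le hq1).const_mul (S * z)
      simpa using this
  have htend2 : Filter.Tendsto (fun N : ℕ => eulerF q (z * q ^ N)) Filter.atTop (nhds 1) := by
    have := htend0.add_const 1
    simpa using this
  have hconst : Filter.Tendsto
      (fun N : ℕ => (∏ j ∈ Finset.range N, (1 - z * q ^ j)) * eulerF q (z * q ^ N))
      Filter.atTop (nhds (eulerF q z)) := by
    have : (fun N : ℕ => (∏ j ∈ Finset.range N, (1 - z * q ^ j)) * eulerF q (z * q ^ N))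
        = fun _ => eulerF q z := by
      funext N
      exact (eulerF_iterate hq0 hq1 hz0 hz1.le N).symm
    rw [this]
    exact tendsto_const_nhds
  have := htend1.mul htend2
  rw [mul_one] at this
  exact tendsto_nhds_unique hconst this

/-- The Mellin transform of the density of the Poissonian exponential functional:
with `a_n = (-1)^n q^{n(n-1)/2} / ((q;q)_∞ (q;q)_n)`, for every `s > -1`,
`∫_0^∞ x^s ∑_n exp(-x/q^n) a_n dx = Γ(1+s) (q^{1+s};q)_∞ / (q;q)_∞`,
the series being summable for each `x > 0`. -/
theorem poissonian_exponential_functional_mellin (q : ℝ) (hq0 : 0 < q) (hq1 : q < 1)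
    (a : ℕ → ℝ)
    (ha : ∀ n : ℕ, a n = (-1) ^ n * q ^ (n * (n - 1) / 2) /
      ((∏' j : ℕ, (1 - q ^ (j + 1))) * ∏ j ∈ Finset.range n, (1 - q ^ (j + 1))))
    (s : ℝ) (hs : -1 < s) :
    (∀ x : ℝ, 0 < x → Summable (fun n : ℕ => Real.exp (-x / q ^ n) * a n)) ∧
    ∫ x in Set.Ioi (0 : ℝ), x ^ s * ∑' n : ℕ, Real.exp (-x / q ^ n) * a n
      = Real.Gamma (1 + s) * (∏' j : ℕ, (1 - q ^ (1 + s) * q ^ (j : ℕ))) /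
          ∏' j : ℕ, (1 - q ^ (j + 1)) := by
  have hz0 : (0:ℝ) < q ^ (1 + s) := Real.rpow_pos_of_pos hq0 _
  have hz1 : q ^ (1 + s) < 1 := Real.rpow_lt_one hq0.le hq1 (by linarith)
  set z : ℝ := q ^ (1 + s) with hzdef
  set Pinf : ℝ := ∏' j : ℕ, (1 - q ^ (j + 1)) with hPdef
  have hPinf_eq : Pinf = ∏' j : ℕ, (1 - q * q ^ j) := by
    rw [hPdef]
    exact tprod_congr fun j => by rw [pow_succ']
  have hPinf_pos : 0 < Pinf := by
    rw [hPinf_eq]; exact (my_prod_aux hq0 hq1 hq0.le hq1).2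
  have ha' : ∀ n : ℕ, a n = eulerC q n / Pinf := by
    intro n
    rw [ha n, eulerC, div_mul_eq_div_div_swap]
  have haabs : ∀ n : ℕ, |a n| = |eulerC q n| / Pinf := by
    intro n
    rw [ha' n, abs_div, abs_of_pos hPinf_pos]
  have hsummac : Summable (fun n : ℕ => |eulerC q n| / Pinf) := by
    have := (eulerC_abs_summable hq0 hq1 (by norm_num : (0:ℝ) ≤ 1) le_rfl).div_const Pinf
    simpa using this
  -- Part 1
  have part1 : ∀ x : ℝ, 0 < x → Summable (fun n : ℕ => Real.exp (-x / q ^ n) * a n) := by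
    intro x hx
    apply Summable.of_norm_bounded (g := fun n => |eulerC q n| / Pinf) hsummac
    intro n
    have hexp : Real.exp (-x / q ^ n) ≤ 1 := by
      apply Real.exp_le_one_iff.2
      have := pow_pos hq0 n
      rw [neg_div]
      simp only [neg_nonpos]
      positivity
    rw [Real.norm_eq_abs, abs_mul, abs_of_pos (Real.exp_pos _), ← haabs n]
    calc Real.exp (-x / q ^ n) * |a n| ≤ 1 * |a n| :=
          mul_le_mul_of_nonneg_right hexp (abs_nonneg _)
    _ = |a n| := one_mul _
  refine ⟨part1, ?_⟩
  -- the Gamma integral for each n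
  have hqn : ∀ n : ℕ, (0:ℝ) < (q ^ n)⁻¹ := fun n => inv_pos.2 (pow_pos hq0 n)
  have hfun_eq : ∀ n : ℕ, ∀ x : ℝ,
      x ^ (s + 1 - 1) * Real.exp (-((q ^ n)⁻¹ * x)) = x ^ s * Real.exp (-x / q ^ n) := by
    intro n x
    have h1 : s + 1 - 1 = s := by ring
    have h2 : -((q ^ n)⁻¹ * x) = -x / q ^ n := by
      field_simp
    rw [h1, h2]
  have hpow : ∀ n : ℕ, ((q ^ n : ℝ)) ^ (s + 1) = z ^ n := by
    intro n
    rw [hzdef, ← Real.rpow_natCast q n, ← Real.rpow_mul hq0.le, ← Real.rpow_natCast (q ^ (1+s)) n,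
      ← Real.rpow_mul hq0.le]
    ring_nf
  have hint : ∀ n : ℕ, ∫ x in Set.Ioi (0:ℝ), x ^ s * Real.exp (-x / q ^ n)
      = z ^ n * Real.Gamma (1 + s) := by
    intro n
    have := integral_rpow_mul_exp_neg_mul_Ioi (a := s + 1) (r := (q ^ n)⁻¹)
      (by linarith) (hqn n)
    rw [show (1:ℝ) / (q ^ n)⁻¹ = q ^ n by simp, hpow n,
      show Real.Gamma (s + 1) = Real.Gamma (1 + s) by rw [add_comm]] at this
    rw [← this]
    exact setIntegral_congr_fun measurableSet_Ioi fun x _ => (hfun_eq n x).symm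
  -- integrability for each n
  have hInt : ∀ n : ℕ, IntegrableOn (fun x : ℝ => x ^ s * Real.exp (-x / q ^ n))
      (Set.Ioi (0:ℝ)) := by
    intro n
    have := integrableOn_rpow_mul_exp_neg_mul_rpow (p := (1:ℝ)) (s := s) (b := (q ^ n)⁻¹)
      hs zero_lt_one (hqn n)
    apply this.congr_fun _ measurableSet_Ioi
    intro x _
    show x ^ s * Real.exp (-(q ^ n)⁻¹ * x ^ (1:ℝ)) = x ^ s * Real.exp (-x / q ^ n)
    rw [Real.rpow_one, show -(q ^ n)⁻¹ * x = -((q ^ n)⁻¹ * x) by ring]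
    have h := hfun_eq n x
    rw [show s + 1 - 1 = s by ring] at h
    exact h
  set F : ℕ → ℝ → ℝ := fun n x => x ^ s * (Real.exp (-x / q ^ n) * a n) with hFdef
  have hFInt : ∀ n : ℕ, Integrable (F n) (volume.restrict (Set.Ioi (0:ℝ))) := by
    intro n
    have := (hInt n).mul_const (a n)
    apply this.congr
    filter_upwards with x
    simp only [hFdef]
    ring
  have hFnorm : ∀ n : ℕ, (∫ x in Set.Ioi (0:ℝ), ‖F n x‖)
      = z ^ n * Real.Gamma (1 + s) * (|eulerC q n| / Pinf) := by
    intro n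
    have heq : ∀ x ∈ Set.Ioi (0:ℝ), ‖F n x‖ = (x ^ s * Real.exp (-x / q ^ n)) * |a n| := by
      intro x hx
      have hx0 : (0:ℝ) < x := hx
      rw [hFdef]
      simp only [Real.norm_eq_abs, abs_mul]
      rw [abs_of_pos (Real.rpow_pos_of_pos hx0 s), abs_of_pos (Real.exp_pos _)]
      ring
    rw [setIntegral_congr_fun measurableSet_Ioi heq, integral_mul_const, hint n, haabs n]
  have hFsum : Summable fun n => ∫ x in Set.Ioi (0:ℝ), ‖F n x‖ := by
    apply Summable.congr _ (fun n => (hFnorm n).symm)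
    have h1 : Summable (fun n : ℕ => |eulerC q n| * z ^ n) :=
      eulerC_abs_summable hq0 hq1 hz0.le hz1.le
    have := (h1.mul_left (Real.Gamma (1 + s) / Pinf))
    apply this.congr
    intro n
    field_simp
  -- interchange
  have hinterchange : ∫ x in Set.Ioi (0:ℝ), ∑' n : ℕ, F n x
      = ∑' n : ℕ, ∫ x in Set.Ioi (0:ℝ), F n x :=
    (integral_tsum_of_summable_integral_norm hFInt hFsum).symm
  have hlhs : (∫ x in Set.Ioi (0:ℝ), x ^ s * ∑' n : ℕ, Real.exp (-x / q ^ n) * a n)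
      = ∫ x in Set.Ioi (0:ℝ), ∑' n : ℕ, F n x := by
    congr 1
    funext x
    rw [hFdef]
    exact (tsum_mul_left).symm
  have hterm : ∀ n : ℕ, (∫ x in Set.Ioi (0:ℝ), F n x)
      = Real.Gamma (1 + s) / Pinf * (eulerC q n * z ^ n) := by
    intro n
    have : (∫ x in Set.Ioi (0:ℝ), F n x)
        = (∫ x in Set.Ioi (0:ℝ), x ^ s * Real.exp (-x / q ^ n)) * a n := by
      rw [← integral_mul_const]
      congr 1
      funext x
      rw [hFdef]; ring
    rw [this, hint n, ha' n]
    field_simp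
  rw [hlhs, hinterchange]
  calc ∑' n : ℕ, ∫ x in Set.Ioi (0:ℝ), F n x
      = ∑' n : ℕ, Real.Gamma (1 + s) / Pinf * (eulerC q n * z ^ n) := tsum_congr hterm
  _ = Real.Gamma (1 + s) / Pinf * ∑' n : ℕ, eulerC q n * z ^ n := tsum_mul_left
  _ = Real.Gamma (1 + s) / Pinf * eulerF q z := by rw [eulerF]
  _ = Real.Gamma (1 + s) / Pinf * ∏' j : ℕ, (1 - z * q ^ j) := by
      rw [eulerF_eq_tprod hq0 hq1 hz0.le hz1]
  _ = Real.Gamma (1 + s) * (∏' j : ℕ, (1 - z * q ^ (j : ℕ))) / Pinf := by ring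
end
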